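/- arXiv:1703.06806 — 2 statements merged into one kernel-verified Lean document; each statement's English description precedes it below -/
import Mathlib

section
/- There exist a constant c > 0 and a real number x₀ such that for all x ≥ x₀: Σ_{p prime, x ≤ p ≤ 2x} (1/(4√p)) · Σ_{n ∈ ℕ, p−2√p ≤ n ≤ p+2√p} (Λ(n)/log n) · (φ(n)/n) ≥ c · x/(log x)², where the inner sum runs over natural numbers n ≥ 2 in the real interval [p − 2√p, p + 2√p]. -/
open ArithmeticFunction

open Nat Finset

theorem myCB (n : ℕ) (n_large : 2 < n) :
    centralBinom n ≤ ((2 * n) ^ Nat.sqrt (2 * n) * 4 ^ (2 * n / 3)) *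
      (2 * n) ^ (((Finset.Ioc n (2 * n)).filter Nat.Prime).card) := by
  have n_pos : 0 < n := (Nat.zero_le _).trans_lt n_large
  have n2_pos : 1 ≤ 2 * n := mul_pos (zero_lt_two' ℕ) n_pos
  let R := (Finset.range (2 * n + 1)).filter Nat.Prime
  let f : ℕ → ℕ := fun x => x ^ n.centralBinom.factorization x
  have hRf : ∏ x ∈ R, f x = centralBinom n := by
    rw [show ∏ x ∈ R, f x = ∏ x ∈ Finset.range (2 * n + 1), f x from
      Finset.prod_filter_of_ne fun p _ h => by
        contrapose! h; dsimp only [f]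
        rw [factorization_eq_zero_of_not_prime n.centralBinom h, _root_.pow_zero]]
    exact n.prod_pow_factorization_centralBinom
  rw [← hRf, ← Finset.prod_filter_mul_prod_filter_not R (· ≤ 2 * n / 3)]
  have hS : R.filter (· ≤ 2 * n / 3) = (Finset.range (2 * n / 3 + 1)).filter Nat.Prime := by
    ext p
    simp only [R, Finset.mem_filter, Finset.mem_range, Nat.lt_succ_iff]
    exact ⟨fun ⟨⟨_, hp⟩, h⟩ => ⟨h, hp⟩,
      fun ⟨h, hp⟩ => ⟨⟨by have := Nat.div_le_self (2 * n) 3; omega, hp⟩, h⟩⟩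
  apply Nat.mul_le_mul
  · -- small primes part, as in mathlib's Bertrand proof
    rw [hS]
    set S := (Finset.range (2 * n / 3 + 1)).filter Nat.Prime
    rw [← Finset.prod_filter_mul_prod_filter_not S (· ≤ Nat.sqrt (2 * n))]
    apply Nat.mul_le_mul
    · refine (Finset.prod_le_prod' fun p _ => (?_ : f p ≤ 2 * n)).trans ?_
      · exact pow_factorization_choose_le (mul_pos two_pos n_pos)
      have : (Finset.Icc 1 (Nat.sqrt (2 * n))).card = Nat.sqrt (2 * n) := by
        rw [Nat.card_Icc, Nat.add_sub_cancel]
      rw [Finset.prod_const]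
      refine pow_right_mono₀ n2_pos ((Finset.card_le_card fun x hx => ?_).trans this.le)
      obtain ⟨h1, h2⟩ := Finset.mem_filter.1 hx
      exact Finset.mem_Icc.mpr ⟨(Finset.mem_filter.1 h1).2.one_lt.le, h2⟩
    · refine le_trans ?_ (primorial_le_4_pow (2 * n / 3))
      refine (Finset.prod_le_prod' fun p hp => (?_ : f p ≤ p)).trans ?_
      · obtain ⟨h1, h2⟩ := Finset.mem_filter.1 hp
        refine (pow_right_mono₀ (Finset.mem_filter.1 h1).2.one_lt.le ?_).trans (pow_one p).le
        exact Nat.factorization_choose_le_one (Nat.sqrt_lt'.mp <| not_le.1 h2)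
      refine Finset.prod_le_prod_of_subset_of_one_le' (Finset.filter_subset _ _) ?_
      exact fun p hp _ => (Finset.mem_filter.1 hp).2.one_lt.le
  · -- large primes part
    rw [← Finset.prod_filter_mul_prod_filter_not (R.filter (fun p => ¬ p ≤ 2 * n / 3)) (n < ·)]
    have h1 : ∏ p ∈ ((R.filter (fun p => ¬ p ≤ 2 * n / 3)).filter (fun p => ¬ n < p)), f p = 1 := by
      apply Finset.prod_eq_one
      intro p hp
      simp only [Finset.mem_filter, not_le, not_lt, R] at hp
      obtain ⟨⟨⟨_, hp1⟩, h2⟩, h3⟩ := hp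
      have : 2 * n < 3 * p := by omega
      dsimp only [f]
      rw [Nat.factorization_centralBinom_of_two_mul_self_lt_three_mul n_large h3 this,
        _root_.pow_zero]
    rw [mul_comm, h1, one_mul]
    calc ∏ p ∈ ((R.filter (fun p => ¬ p ≤ 2 * n / 3)).filter (n < ·)), f p
        ≤ ∏ _p ∈ ((R.filter (fun p => ¬ p ≤ 2 * n / 3)).filter (n < ·)), (2 * n) := by
          refine Finset.prod_le_prod' fun p _ => ?_
          exact pow_factorization_choose_le (mul_pos two_pos n_pos)
      _ ≤ (2 * n) ^ (((Finset.Ioc n (2 * n)).filter Nat.Prime).card) := by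
          rw [Finset.prod_const]
          apply Nat.pow_le_pow_right n2_pos
          apply Finset.card_le_card
          intro p hp
          simp only [Finset.mem_filter, Finset.mem_range, R] at hp
          obtain ⟨⟨⟨hlt, hpr⟩, _⟩, hnp⟩ := hp
          exact Finset.mem_filter.mpr ⟨Finset.mem_Ioc.mpr ⟨hnp, by omega⟩, hpr⟩


open Filter Asymptotics in
theorem little_o_aux : ∀ᶠ x : ℝ in atTop,
    Real.log x + Real.sqrt (2 * x) * Real.log (2 * x) ≤ x / 5 := by
  have hlogsqrt : Real.log =o[atTop] Real.sqrt := by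
    refine (isLittleO_log_rpow_atTop (by norm_num : (0:ℝ) < 1/2)).congr'
      (Eventually.of_forall fun _ => rfl) (Eventually.of_forall fun y => ?_)
    rw [Real.sqrt_eq_rpow]
  have hg : (fun y : ℝ => Real.sqrt y * Real.log y) =o[atTop] (fun y : ℝ => y) := by
    have h1 : (fun y : ℝ => Real.sqrt y * Real.log y) =o[atTop]
        (fun y : ℝ => Real.sqrt y * Real.sqrt y) :=
      (isBigO_refl Real.sqrt atTop).mul_isLittleO hlogsqrt
    refine h1.congr' (Eventually.of_forall fun _ => rfl) ?_
    filter_upwards [eventually_ge_atTop (0:ℝ)] with y hy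
    exact Real.mul_self_sqrt hy
  have h2x : Tendsto (fun x : ℝ => 2 * x) atTop atTop :=
    Tendsto.const_mul_atTop two_pos tendsto_id
  have h2 : (fun x : ℝ => Real.sqrt (2 * x) * Real.log (2 * x)) =o[atTop]
      (fun x : ℝ => x) := by
    have := (hg.comp_tendsto h2x).trans_isBigO
      (isBigO_const_mul_self (2:ℝ) (fun x : ℝ => x) atTop)
    exact this
  have h3 := Real.isLittleO_log_id_atTop.add h2
  have h4 := h3.def (by norm_num : (0:ℝ) < 1/5)
  filter_upwards [h4, eventually_ge_atTop (0:ℝ)] with x hx hx0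
  have h5 := le_trans (le_abs_self _) hx
  rw [Real.norm_eq_abs, id_eq, abs_of_nonneg hx0] at h5
  linarith

open Filter in
theorem cheb_lower : ∀ᶠ n : ℕ in atTop,
    (n : ℝ) / 4 ≤ (((Finset.Ioc n (2 * n)).filter Nat.Prime).card : ℝ) * Real.log (2 * n) := by
  filter_upwards [eventually_ge_atTop 512, tendsto_natCast_atTop_atTop.eventually little_o_aux]
    with n hn hEn
  set Δ := ((Finset.Ioc n (2 * n)).filter Nat.Prime).card with hΔ
  have hmain : 4 ^ n ≤ n * ((2 * n) ^ Nat.sqrt (2 * n) * 4 ^ (2 * n / 3)) * (2 * n) ^ Δ := by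
    have h1 := Nat.four_pow_lt_mul_centralBinom n (by omega)
    have h2 := myCB n (by omega)
    calc 4 ^ n ≤ n * n.centralBinom := h1.le
      _ ≤ n * (((2 * n) ^ Nat.sqrt (2 * n) * 4 ^ (2 * n / 3)) * (2 * n) ^ Δ) :=
        Nat.mul_le_mul_left n h2
      _ = _ := by ring
  have hn0 : (0:ℝ) < n := by positivity
  have h2n0 : (0:ℝ) < 2 * n := by positivity
  -- take real logs
  have hR := (Nat.cast_le (α := ℝ)).mpr hmain
  push_cast at hR
  have hlog := Real.log_le_log (by positivity) hR
  rw [Real.log_pow, Real.log_mul (by positivity) (by positivity),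
    Real.log_mul (by positivity) (by positivity),
    Real.log_mul (by positivity) (by positivity), Real.log_pow, Real.log_pow, Real.log_pow]
    at hlog
  have s1 : (Nat.sqrt (2 * n) : ℝ) ≤ Real.sqrt (2 * n) := by
    have := Real.nat_sqrt_le_real_sqrt (a := 2 * n)
    push_cast at this ⊢
    exact this
  have s2 : ((2 * n / 3 : ℕ) : ℝ) ≤ 2 * (n:ℝ) / 3 := by
    calc ((2 * n / 3 : ℕ) : ℝ) ≤ ((2 * n : ℕ) : ℝ) / 3 := Nat.cast_div_le
      _ = 2 * (n:ℝ) / 3 := by push_cast; ring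
  have hlog2n : (0:ℝ) ≤ Real.log (2 * n) := Real.log_nonneg (by
    have : (1:ℝ) ≤ (n:ℝ) := by exact_mod_cast (by omega : 1 ≤ n)
    linarith)
  have hlog4eq : Real.log 4 = 2 * Real.log 2 := by
    rw [show (4:ℝ) = 2 ^ 2 by norm_num, Real.log_pow]; push_cast; ring
  have hlog4 : (1.386:ℝ) ≤ Real.log 4 := by
    have h := Real.log_two_gt_d9; rw [hlog4eq]; nlinarith
  have hsq : Real.sqrt (2 * (n:ℝ)) * Real.log (2 * (n:ℝ)) + Real.log n ≤ n / 5 := by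
    push_cast at hEn; linarith
  have hlogle : Real.log 4 ≤ 1.387 := by
    have h := Real.log_two_lt_d9; rw [hlog4eq]; nlinarith
  have h0log4 : (0:ℝ) ≤ Real.log 4 := by linarith
  push_cast at hlog
  nlinarith [mul_le_mul_of_nonneg_right s1 hlog2n, mul_le_mul_of_nonneg_right s2 h0log4,
    mul_le_mul_of_nonneg_left hlog4 hn0.le,
    mul_le_mul_of_nonneg_left hlogle (by positivity : (0:ℝ) ≤ 2 * (n:ℝ) / 3)]

open Filter in
theorem primes_in_interval : ∀ᶠ x : ℝ in atTop,
    x / (9 * Real.log x) ≤ (((Finset.Icc ⌈x⌉₊ ⌊2 * x⌋₊).filter Nat.Prime).card : ℝ) := by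
  filter_upwards [eventually_ge_atTop (4:ℝ), tendsto_nat_ceil_atTop.eventually cheb_lower,
    Real.isLittleO_log_id_atTop.def (by norm_num : (0:ℝ) < 1/144)] with x hx4 hch hlt
  set n := ⌈x⌉₊ with hn
  set Δ := ((Finset.Ioc n (2 * n)).filter Nat.Prime).card with hΔ
  set T := (Finset.Icc n ⌊2 * x⌋₊).filter Nat.Prime with hT
  have hxn : x ≤ n := Nat.le_ceil x
  have hn1 : (n : ℝ) ≤ x + 1 := (Nat.ceil_lt_add_one (by linarith)).le
  have hlogx : 0 < Real.log x := Real.log_pos (by linarith)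
  have hfl : (2 : ℝ) * x < ⌊2 * x⌋₊ + 1 := Nat.lt_floor_add_one _
  -- card bound in ℕ
  have h2n : 2 * n ≤ ⌊2 * x⌋₊ + 2 := by
    have : ((2 * n : ℕ) : ℝ) < (⌊2 * x⌋₊ : ℝ) + 3 := by push_cast; linarith
    exact_mod_cast by exact_mod_cast Nat.lt_succ_iff.mp (by exact_mod_cast
      (show (2 * n : ℕ) < ⌊2 * x⌋₊ + 3 by exact_mod_cast this))
  have hcard : Δ ≤ T.card + 2 := by
    have hsub : (Finset.Ioc n (2 * n)).filter Nat.Prime ⊆ T ∪ Finset.Ioc ⌊2 * x⌋₊ (2 * n) := by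
      intro p hp
      simp only [Finset.mem_filter, Finset.mem_Ioc] at hp
      obtain ⟨⟨hp1, hp2⟩, hp3⟩ := hp
      rcases le_or_gt p ⌊2 * x⌋₊ with h | h
      · exact Finset.mem_union_left _ (Finset.mem_filter.mpr
          ⟨Finset.mem_Icc.mpr ⟨hp1.le, h⟩, hp3⟩)
      · exact Finset.mem_union_right _ (Finset.mem_Ioc.mpr ⟨h, hp2⟩)
    calc Δ ≤ (T ∪ Finset.Ioc ⌊2 * x⌋₊ (2 * n)).card := Finset.card_le_card hsub
      _ ≤ T.card + (Finset.Ioc ⌊2 * x⌋₊ (2 * n)).card := Finset.card_union_le _ _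
      _ ≤ T.card + 2 := by
          rw [Nat.card_Ioc]; omega
  -- real arithmetic
  have hlog2n : Real.log (2 * n) ≤ 2 * Real.log x := by
    have h1 : (2 : ℝ) * n ≤ 4 * x := by linarith
    have h2 : Real.log (2 * n) ≤ Real.log (4 * x) := Real.log_le_log (by positivity) h1
    have h3 : Real.log (4 * x) = Real.log 4 + Real.log x :=
      Real.log_mul (by norm_num) (by linarith)
    have h4 : Real.log 4 ≤ Real.log x := Real.log_le_log (by norm_num) hx4
    linarith
  have hΔlb : x / (8 * Real.log x) ≤ (Δ : ℝ) := by
    have h1 : (n : ℝ) / 4 ≤ (Δ : ℝ) * Real.log (2 * n) := by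
      have := hch; push_cast at this ⊢; convert this using 3 <;> push_cast <;> ring
    have h2 : (Δ : ℝ) * Real.log (2 * n) ≤ (Δ : ℝ) * (2 * Real.log x) :=
      mul_le_mul_of_nonneg_left hlog2n (Nat.cast_nonneg _)
    have h3 : x / 4 ≤ (Δ : ℝ) * (2 * Real.log x) := by linarith
    rw [div_le_iff₀ (by positivity)]
    nlinarith
  have hTlb : (Δ : ℝ) - 2 ≤ (T.card : ℝ) := by
    have := (Nat.cast_le (α := ℝ)).mpr hcard; push_cast at this; linarith
  have hlogsmall : Real.log x ≤ x / 144 := by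
    have h := le_trans (le_abs_self _) hlt
    simp only [Real.norm_eq_abs, id_eq] at h
    rw [abs_of_nonneg (show (0:ℝ) ≤ x by linarith)] at h
    linarith
  have key : x / (9 * Real.log x) + 2 ≤ x / (8 * Real.log x) := by
    rw [div_add' _ _ _ (by positivity), div_le_div_iff₀ (by positivity) (by positivity)]
    nlinarith
  linarith

set_option maxHeartbeats 1000000 in
open ArithmeticFunction Filter in
/-- There exist `c > 0` and `x₀` such that for all `x ≥ x₀`:
`Σ_{p prime, x ≤ p ≤ 2x} (1/(4√p)) · Σ_{n ≥ 2, p−2√p ≤ n ≤ p+2√p} (Λ(n)/log n)·(φ(n)/n)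
  ≥ c·x/(log x)²`. -/
theorem main_term_lower_bound :
    ∃ c : ℝ, 0 < c ∧ ∃ x₀ : ℝ, ∀ x : ℝ, x₀ ≤ x →
      ∑ p ∈ (Finset.Icc ⌈x⌉₊ ⌊2 * x⌋₊).filter Nat.Prime,
        (1 / (4 * Real.sqrt p)) *
          ∑ n ∈ Finset.Icc (max 2 ⌈(p : ℝ) - 2 * Real.sqrt p⌉₊) ⌊(p : ℝ) + 2 * Real.sqrt p⌋₊,
            (Λ n / Real.log n) * ((Nat.totient n : ℝ) / n) ≥
      c * x / (Real.log x) ^ 2 := by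
  have H : ∀ᶠ x : ℝ in atTop,
      ∑ p ∈ (Finset.Icc ⌈x⌉₊ ⌊2 * x⌋₊).filter Nat.Prime,
        (1 / (4 * Real.sqrt p)) *
          ∑ n ∈ Finset.Icc (max 2 ⌈(p : ℝ) - 2 * Real.sqrt p⌉₊) ⌊(p : ℝ) + 2 * Real.sqrt p⌋₊,
            (Λ n / Real.log n) * ((Nat.totient n : ℝ) / n) ≥
      (1/2000) * x / (Real.log x) ^ 2 := by
    filter_upwards [primes_in_interval, eventually_ge_atTop (16:ℝ)] with x hPI hx16
    classical
    have hx0 : (0:ℝ) < x := by linarith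
    have hsx : (0:ℝ) < Real.sqrt x := Real.sqrt_pos.mpr hx0
    have hsx2 : (2:ℝ) ≤ Real.sqrt x := by
      have : Real.sqrt 4 ≤ Real.sqrt x := Real.sqrt_le_sqrt (by linarith)
      rwa [show (4:ℝ) = 2^2 by norm_num, Real.sqrt_sq (by norm_num)] at this
    have hL : (0:ℝ) < Real.log x := Real.log_pos (by linarith)
    set T := (Finset.Icc ⌈x⌉₊ ⌊2 * x⌋₊).filter Nat.Prime with hTdef
    set g : ℕ → ℕ := fun p => ⌊(p:ℝ) / Real.sqrt x⌋₊ with hgdef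
    set B := T.image g with hBdef
    -- basic facts about members of T
    have hmemT : ∀ p ∈ T, Nat.Prime p ∧ x ≤ (p:ℝ) ∧ (p:ℝ) ≤ 2 * x := by
      intro p hp
      obtain ⟨hp1, hp2⟩ := Finset.mem_filter.mp hp
      obtain ⟨h1, h2⟩ := Finset.mem_Icc.mp hp1
      refine ⟨hp2, le_trans (Nat.le_ceil x) (by exact_mod_cast h1), ?_⟩
      calc (p:ℝ) ≤ (⌊2*x⌋₊ : ℝ) := by exact_mod_cast h2
        _ ≤ 2 * x := Nat.floor_le (by linarith)
    -- same fiber implies close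
    have hfiber : ∀ p ∈ T, ∀ q ∈ T, g q = g p → |(p:ℝ) - q| < Real.sqrt x := by
      intro p hp q hq hgq
      have h1 : ((g p : ℝ)) ≤ (p:ℝ) / Real.sqrt x := Nat.floor_le (by positivity)
      have h2 : (p:ℝ) / Real.sqrt x < (g p : ℝ) + 1 := Nat.lt_floor_add_one _
      have h3 : ((g p : ℝ)) ≤ (q:ℝ) / Real.sqrt x := by
        rw [← hgq]; exact Nat.floor_le (by positivity)
      have h4 : (q:ℝ) / Real.sqrt x < (g p : ℝ) + 1 := by
        rw [← hgq]; exact Nat.lt_floor_add_one _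
      have h6 : |(p:ℝ)/Real.sqrt x - (q:ℝ)/Real.sqrt x| < 1 :=
        abs_sub_lt_iff.mpr ⟨by linarith, by linarith⟩
      have h7 : (p:ℝ)/Real.sqrt x - (q:ℝ)/Real.sqrt x = ((p:ℝ) - q)/Real.sqrt x := by ring
      rw [h7, abs_div, abs_of_pos hsx, div_lt_one hsx] at h6
      exact h6
    -- the inner sum is at least half the fiber count
    have hterm : ∀ n : ℕ, (0:ℝ) ≤ (Λ n / Real.log n) * ((Nat.totient n : ℝ) / n) := by
      intro n
      have h1 : 0 ≤ Λ n / Real.log n :=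
        div_nonneg vonMangoldt_nonneg (Real.log_natCast_nonneg n)
      exact mul_nonneg h1 (div_nonneg (by positivity) (by positivity))
    have hinner : ∀ p ∈ T,
        ((T.filter (fun q => g q = g p)).card : ℝ) / 2 ≤
        ∑ n ∈ Finset.Icc (max 2 ⌈(p : ℝ) - 2 * Real.sqrt p⌉₊) ⌊(p : ℝ) + 2 * Real.sqrt p⌋₊,
            (Λ n / Real.log n) * ((Nat.totient n : ℝ) / n) := by
      intro p hp
      obtain ⟨hpp, hpx, hp2x⟩ := hmemT p hp
      have hsp : Real.sqrt x ≤ Real.sqrt p := Real.sqrt_le_sqrt hpx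
      have hsub : T.filter (fun q => g q = g p) ⊆
          Finset.Icc (max 2 ⌈(p : ℝ) - 2 * Real.sqrt p⌉₊) ⌊(p : ℝ) + 2 * Real.sqrt p⌋₊ := by
        intro q hq
        obtain ⟨hqT, hgq⟩ := Finset.mem_filter.mp hq
        obtain ⟨hqp, _, _⟩ := hmemT q hqT
        have hclose := hfiber p hp q hqT hgq
        rw [abs_lt] at hclose
        refine Finset.mem_Icc.mpr ⟨max_le hqp.two_le (Nat.ceil_le.mpr (by nlinarith [hclose.1])),
          Nat.le_floor (by nlinarith [hclose.2])⟩
      calc ((T.filter (fun q => g q = g p)).card : ℝ) / 2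
          = ∑ _q ∈ T.filter (fun q => g q = g p), (1/2 : ℝ) := by
            rw [Finset.sum_const, nsmul_eq_mul]; ring
        _ ≤ ∑ q ∈ T.filter (fun q => g q = g p),
              (Λ q / Real.log q) * ((Nat.totient q : ℝ) / q) := by
            refine Finset.sum_le_sum fun q hq => ?_
            obtain ⟨hqT, _⟩ := Finset.mem_filter.mp hq
            have hqp : Nat.Prime q := (hmemT q hqT).1
            have hq2 : 2 ≤ q := hqp.two_le
            have hq2R : (2:ℝ) ≤ (q:ℝ) := by exact_mod_cast hq2
            have hlogq : 0 < Real.log q := Real.log_pos (by linarith)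
            rw [vonMangoldt_apply_prime hqp, div_self hlogq.ne', one_mul,
              Nat.totient_prime hqp, Nat.cast_sub hqp.one_lt.le, Nat.cast_one,
              le_div_iff₀ (by positivity)]
            linarith
        _ ≤ _ := Finset.sum_le_sum_of_subset_of_nonneg hsub fun n _ _ => hterm n
    -- notation
    set u := Real.sqrt x with hu
    have hu2 : u * u = x := Real.mul_self_sqrt hx0.le
    set L := Real.log x with hLdef
    set SN := ∑ p ∈ T, ((T.filter (fun q => g q = g p)).card : ℝ) with hSNdef
    have hSN0 : (0:ℝ) ≤ SN := Finset.sum_nonneg fun p _ => by positivity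
    have hS0 : (0:ℝ) ≤ ∑ p ∈ T, (1 / (4 * Real.sqrt p)) *
        ∑ n ∈ Finset.Icc (max 2 ⌈(p : ℝ) - 2 * Real.sqrt p⌉₊) ⌊(p : ℝ) + 2 * Real.sqrt p⌋₊,
          (Λ n / Real.log n) * ((Nat.totient n : ℝ) / n) := by
      refine Finset.sum_nonneg fun p _ => mul_nonneg (by positivity) ?_
      exact Finset.sum_nonneg fun n _ => hterm n
    have h2xpos : (0:ℝ) < 2 * x := by linarith
    have hs2x : (0:ℝ) < Real.sqrt (2 * x) := Real.sqrt_pos.mpr h2xpos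
    -- lower bound the outer sum
    have hSlow : (1 / (8 * Real.sqrt (2 * x))) * SN ≤ ∑ p ∈ T, (1 / (4 * Real.sqrt p)) *
        ∑ n ∈ Finset.Icc (max 2 ⌈(p : ℝ) - 2 * Real.sqrt p⌉₊) ⌊(p : ℝ) + 2 * Real.sqrt p⌋₊,
          (Λ n / Real.log n) * ((Nat.totient n : ℝ) / n) := by
      have step : ∀ p ∈ T, (1 / (4 * Real.sqrt (2 * x))) *
          (((T.filter (fun q => g q = g p)).card : ℝ) / 2) ≤ (1 / (4 * Real.sqrt p)) *
          ∑ n ∈ Finset.Icc (max 2 ⌈(p : ℝ) - 2 * Real.sqrt p⌉₊) ⌊(p : ℝ) + 2 * Real.sqrt p⌋₊,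
            (Λ n / Real.log n) * ((Nat.totient n : ℝ) / n) := by
        intro p hp
        obtain ⟨hpp, hpx, hp2x⟩ := hmemT p hp
        have hsp : (0:ℝ) < Real.sqrt p := Real.sqrt_pos.mpr (by linarith)
        have hsple : Real.sqrt p ≤ Real.sqrt (2 * x) := Real.sqrt_le_sqrt hp2x
        refine mul_le_mul ?_ (hinner p hp) (by positivity) (by positivity)
        apply one_div_le_one_div_of_le (by positivity)
        linarith
      calc (1 / (8 * Real.sqrt (2 * x))) * SN
          = ∑ p ∈ T, (1 / (4 * Real.sqrt (2 * x))) *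
              (((T.filter (fun q => g q = g p)).card : ℝ) / 2) := by
            rw [hSNdef, Finset.mul_sum]
            exact Finset.sum_congr rfl fun p _ => by ring
        _ ≤ _ := Finset.sum_le_sum step
    -- fiberwise identities
    have hmaps : ∀ p ∈ T, g p ∈ B := fun p hp => Finset.mem_image_of_mem g hp
    have hcardsum : ∑ j ∈ B, ((T.filter (fun p => g p = j)).card : ℝ) = (T.card : ℝ) := by
      rw [← Nat.cast_sum]
      exact_mod_cast congrArg (Nat.cast (R := ℝ)) (Finset.card_eq_sum_card_fiberwise hmaps).symm
    have hSN_eq : SN = ∑ j ∈ B, ((T.filter (fun p => g p = j)).card : ℝ)^2 := by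
      rw [hSNdef, ← Finset.sum_fiberwise_of_maps_to hmaps
        (fun p => ((T.filter (fun q => g q = g p)).card : ℝ))]
      refine Finset.sum_congr rfl fun j hj => ?_
      have hconst : ∀ p ∈ T.filter (fun p => g p = j),
          ((T.filter (fun q => g q = g p)).card : ℝ) =
          ((T.filter (fun p => g p = j)).card : ℝ) := by
        intro p hp
        rw [(Finset.mem_filter.mp hp).2]
      rw [Finset.sum_congr rfl hconst, Finset.sum_const, nsmul_eq_mul]
      ring
    -- Cauchy–Schwarz
    have hCS : (T.card : ℝ)^2 ≤ (B.card : ℝ) * SN := by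
      rw [hSN_eq, ← hcardsum]
      exact_mod_cast sq_sum_le_card_mul_sum_sq
        (s := B) (f := fun j => ((T.filter (fun p => g p = j)).card : ℝ))
    -- bound on the number of blocks
    have hBcard : (B.card : ℝ) ≤ 2 * u := by
      have hBsub : B ⊆ Finset.Icc ⌊u⌋₊ ⌊2 * u⌋₊ := by
        intro j hj
        obtain ⟨p, hp, rfl⟩ := Finset.mem_image.mp hj
        obtain ⟨_, hpx, hp2x⟩ := hmemT p hp
        have hlow : u ≤ (p:ℝ) / u := by
          rw [le_div_iff₀ hsx]
          calc u * u = x := hu2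
            _ ≤ p := hpx
        have hhigh : (p:ℝ) / u ≤ 2 * u := by
          rw [div_le_iff₀ hsx]
          calc (p:ℝ) ≤ 2 * x := hp2x
            _ = 2 * u * u := by rw [mul_assoc, hu2]
        exact Finset.mem_Icc.mpr ⟨Nat.floor_le_floor hlow, Nat.floor_le_floor hhigh⟩
      have h1 : B.card ≤ ⌊2 * u⌋₊ + 1 - ⌊u⌋₊ := by
        have := Finset.card_le_card hBsub
        rwa [Nat.card_Icc] at this
      have h2 : (⌊2 * u⌋₊ : ℝ) ≤ 2 * u := Nat.floor_le (by positivity)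
      have h3 : u - 1 ≤ (⌊u⌋₊ : ℝ) := by
        have := Nat.lt_floor_add_one u
        linarith
      have hmono : ⌊u⌋₊ ≤ ⌊2 * u⌋₊ := Nat.floor_le_floor (by linarith)
      have h4 : (B.card : ℝ) + (⌊u⌋₊ : ℝ) ≤ (⌊2 * u⌋₊ : ℝ) + 1 := by
        have : B.card + ⌊u⌋₊ ≤ ⌊2 * u⌋₊ + 1 := by omega
        exact_mod_cast this
      linarith
    -- T card positivity
    have hTc : x / (9 * L) ≤ (T.card : ℝ) := hPI
    have hTcpos : (0:ℝ) < (T.card : ℝ) := lt_of_lt_of_le (by positivity) hTc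
    -- collect the multiplicative chain
    have h1 : x ≤ 9 * L * (T.card : ℝ) := by
      rw [div_le_iff₀ (by positivity)] at hTc
      linarith
    have h4 : SN ≤ 8 * Real.sqrt 2 * u * (∑ p ∈ T, (1 / (4 * Real.sqrt p)) *
        ∑ n ∈ Finset.Icc (max 2 ⌈(p : ℝ) - 2 * Real.sqrt p⌉₊) ⌊(p : ℝ) + 2 * Real.sqrt p⌋₊,
          (Λ n / Real.log n) * ((Nat.totient n : ℝ) / n)) := by
      have hrw : Real.sqrt (2 * x) = Real.sqrt 2 * u := Real.sqrt_mul (by norm_num) x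
      have := hSlow
      rw [show (1 / (8 * Real.sqrt (2 * x))) * SN = SN / (8 * Real.sqrt (2 * x)) by ring,
        div_le_iff₀ (by positivity)] at this
      calc SN ≤ (∑ p ∈ T, (1 / (4 * Real.sqrt p)) *
            ∑ n ∈ Finset.Icc (max 2 ⌈(p : ℝ) - 2 * Real.sqrt p⌉₊) ⌊(p : ℝ) + 2 * Real.sqrt p⌋₊,
              (Λ n / Real.log n) * ((Nat.totient n : ℝ) / n)) * (8 * Real.sqrt (2 * x)) := this
        _ = _ := by rw [hrw]; ring
    set S := ∑ p ∈ T, (1 / (4 * Real.sqrt p)) *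
        ∑ n ∈ Finset.Icc (max 2 ⌈(p : ℝ) - 2 * Real.sqrt p⌉₊) ⌊(p : ℝ) + 2 * Real.sqrt p⌋₊,
          (Λ n / Real.log n) * ((Nat.totient n : ℝ) / n) with hSdef
    have hsqrt2 : Real.sqrt 2 ≤ 1.5 := by
      have h := Real.sqrt_le_sqrt (show (2:ℝ) ≤ 2.25 by norm_num)
      rwa [show (2.25:ℝ) = 1.5^2 by norm_num, Real.sqrt_sq (by norm_num)] at h
    have hu2' := hu2
    have emaster : x^2 ≤ 1944 * L^2 * x * S := by
      have e1 : x^2 ≤ (9 * L * (T.card : ℝ))^2 :=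
        pow_le_pow_left₀ hx0.le h1 2
      have e2 : (9 * L * (T.card : ℝ))^2 = 81 * L^2 * (T.card : ℝ)^2 := by ring
      have e3 : 81 * L^2 * ((T.card : ℝ)^2) ≤ 81 * L^2 * ((B.card : ℝ) * SN) :=
        mul_le_mul_of_nonneg_left hCS (by positivity)
      have e4 : (B.card : ℝ) * SN ≤ (2 * u) * SN := mul_le_mul_of_nonneg_right hBcard hSN0
      have e5 : (2 * u) * SN ≤ (2 * u) * (8 * Real.sqrt 2 * u * S) :=
        mul_le_mul_of_nonneg_left h4 (by positivity)
      have e6 : 81 * L^2 * ((2 * u) * (8 * Real.sqrt 2 * u * S)) =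
          1296 * Real.sqrt 2 * (L^2 * x * S) := by rw [← hu2]; ring
      have e7 : 1296 * Real.sqrt 2 * (L^2 * x * S) ≤ 1296 * 1.5 * (L^2 * x * S) := by
        have hnn : (0:ℝ) ≤ L^2 * x * S := mul_nonneg (mul_nonneg (sq_nonneg L) hx0.le) hS0
        nlinarith [mul_le_mul_of_nonneg_right hsqrt2 hnn]
      have e8 : 81 * L^2 * ((B.card : ℝ) * SN) ≤ 1296 * Real.sqrt 2 * (L^2 * x * S) := by
        rw [← e6]
        refine mul_le_mul_of_nonneg_left (le_trans e4 e5) (by positivity)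
      nlinarith
    rw [ge_iff_le, div_le_iff₀ (by positivity : (0:ℝ) < L^2)]
    have h'' : x * x ≤ (1944 * L^2 * S) * x := by nlinarith [emaster]
    have h3 : x ≤ 1944 * L^2 * S := le_of_mul_le_mul_right h'' hx0
    nlinarith [mul_nonneg (mul_nonneg (by norm_num : (0:ℝ) ≤ 1944) (sq_nonneg L)) hS0]
  obtain ⟨x₀, hx₀⟩ := eventually_atTop.mp H
  exact ⟨1/2000, by norm_num, x₀, hx₀⟩
end

section
/- There exists a real number x₀ such that for all real x ≥ x₀, π(2x) − π(x) > x/(2·log x), where π(y) denotes the number of primes ≤ y. -/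
open Nat

open Finset ArithmeticFunction Filter
set_option maxHeartbeats 1000000

namespace Cheb


noncomputable def psi (n : ℕ) : ℝ := ∑ k ∈ Finset.Icc 1 n, Λ k

noncomputable def T (n : ℕ) : ℝ := Real.log (n.factorial)

lemma T_eq_sum_log (n : ℕ) : T n = ∑ m ∈ Finset.Icc 1 n, Real.log m := by
  rw [T, ← Finset.Ico_add_one_right_eq_Icc, ← Finset.prod_Ico_id_eq_factorial]
  push_cast
  rw [Real.log_prod]
  intro x hx
  simp only [Finset.mem_Ico] at hx
  exact_mod_cast Nat.one_le_iff_ne_zero.mp hx.1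

lemma T_identity (n : ℕ) : T n = ∑ d ∈ Finset.Icc 1 n, (n / d : ℕ) * Λ d := by
  rw [T_eq_sum_log]
  have h1 : ∀ m ∈ Finset.Icc 1 n, Real.log m
      = ∑ d ∈ (Finset.Icc 1 n).filter (· ∣ m), Λ d := by
    intro m hm
    simp only [Finset.mem_Icc] at hm
    rw [← vonMangoldt_sum (n := m)]
    apply Finset.sum_congr _ (fun _ _ => rfl)
    ext d
    simp only [Finset.mem_filter, Finset.mem_Icc, Nat.mem_divisors]
    constructor
    · rintro ⟨hdvd, hne⟩
      exact ⟨⟨Nat.pos_of_dvd_of_pos hdvd (by omega),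
        le_trans (Nat.le_of_dvd (by omega) hdvd) hm.2⟩, hdvd⟩
    · rintro ⟨_, hdvd⟩
      exact ⟨hdvd, by omega⟩
  rw [Finset.sum_congr rfl h1]
  simp_rw [Finset.sum_filter]
  rw [Finset.sum_comm]
  apply Finset.sum_congr rfl
  intro d hd
  rw [← Finset.sum_filter, Finset.sum_const]
  have h2 : Finset.filter (fun m => d ∣ m) (Finset.Icc 1 n)
      = Finset.filter (fun m => d ∣ m) (Finset.Ioc 0 n) := by congr 1
  rw [h2, Nat.Ioc_filter_dvd_card_eq_div]
  simp [mul_comm]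




def g (m : ℕ) : ℤ := (m : ℤ) - (m / 2 : ℕ) - (m / 3 : ℕ) - (m / 5 : ℕ) + (m / 30 : ℕ)

lemma g_period (m : ℕ) : g (m + 30) = g m := by
  have h2 : (m + 30) / 2 = m / 2 + 15 := by omega
  have h3 : (m + 30) / 3 = m / 3 + 10 := by omega
  have h5 : (m + 30) / 5 = m / 5 + 6 := by omega
  have h30 : (m + 30) / 30 = m / 30 + 1 := by omega
  simp only [g, h2, h3, h5, h30]
  push_cast
  ring

lemma g_mod (m : ℕ) : g m = g (m % 30) := by
  conv_lhs => rw [← Nat.mod_add_div m 30]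
  generalize m / 30 = q
  induction q with
  | zero => simp
  | succ k ih => rw [Nat.mul_succ, ← Nat.add_assoc, g_period, ih]

lemma g_small : ∀ r < 30, 0 ≤ g r ∧ g r ≤ 1 := by decide

lemma g_nonneg (m : ℕ) : 0 ≤ g m := by
  rw [g_mod]; exact (g_small _ (Nat.mod_lt _ (by norm_num))).1

lemma g_le_one (m : ℕ) : g m ≤ 1 := by
  rw [g_mod]; exact (g_small _ (Nat.mod_lt _ (by norm_num))).2

lemma g_eq_one (m : ℕ) (h1 : 1 ≤ m) (h5 : m ≤ 5) : g m = 1 := by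
  interval_cases m <;> decide





noncomputable def D (n : ℕ) : ℝ := T n - T (n / 2) - T (n / 3) - T (n / 5) + T (n / 30)

lemma T_div_identity (n k : ℕ) (hk : 0 < k) :
    T (n / k) = ∑ d ∈ Finset.Icc 1 n, ((n / k / d : ℕ) : ℝ) * Λ d := by
  rw [T_identity]
  apply Finset.sum_subset
  · apply Finset.Icc_subset_Icc_right
    exact Nat.div_le_self n k
  · intro d hd hnd
    simp only [Finset.mem_Icc] at hd hnd
    have : n / k < d := by omega
    rw [Nat.div_eq_of_lt this]
    simp

lemma D_identity (n : ℕ) : D n = ∑ d ∈ Finset.Icc 1 n, (g (n / d) : ℝ) * Λ d := by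
  rw [D, T_identity, T_div_identity n 2 (by norm_num), T_div_identity n 3 (by norm_num),
    T_div_identity n 5 (by norm_num), T_div_identity n 30 (by norm_num),
    ← Finset.sum_sub_distrib, ← Finset.sum_sub_distrib, ← Finset.sum_sub_distrib,
    ← Finset.sum_add_distrib]
  apply Finset.sum_congr rfl
  intro d hd
  have e2 : n / 2 / d = n / d / 2 := by rw [Nat.div_div_eq_div_mul, Nat.div_div_eq_div_mul, Nat.mul_comm]
  have e3 : n / 3 / d = n / d / 3 := by rw [Nat.div_div_eq_div_mul, Nat.div_div_eq_div_mul, Nat.mul_comm]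
  have e5 : n / 5 / d = n / d / 5 := by rw [Nat.div_div_eq_div_mul, Nat.div_div_eq_div_mul, Nat.mul_comm]
  have e30 : n / 30 / d = n / d / 30 := by rw [Nat.div_div_eq_div_mul, Nat.div_div_eq_div_mul, Nat.mul_comm]
  rw [e2, e3, e5, e30]
  simp only [g, Int.cast_add, Int.cast_sub, Int.cast_natCast]
  ring

lemma D_le_psi (n : ℕ) : D n ≤ psi n := by
  rw [D_identity, psi]
  apply Finset.sum_le_sum
  intro d hd
  calc (g (n / d) : ℝ) * Λ d ≤ 1 * Λ d := by
        apply mul_le_mul_of_nonneg_right _ vonMangoldt_nonneg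
        exact_mod_cast g_le_one _
    _ = Λ d := one_mul _

lemma psi_sub_psi_le_D (n : ℕ) : psi n - psi (n / 6) ≤ D n := by
  have hsub : Finset.Icc 1 (n / 6) ⊆ Finset.Icc 1 n :=
    Finset.Icc_subset_Icc_right (Nat.div_le_self n 6)
  have : psi n - psi (n / 6) = ∑ d ∈ Finset.Icc 1 n \ Finset.Icc 1 (n / 6), Λ d := by
    rw [psi, psi, sub_eq_iff_eq_add, eq_comm]
    exact Finset.sum_sdiff hsub
  rw [this, D_identity]
  rw [← Finset.sum_sdiff hsub (f := fun d => (g (n / d) : ℝ) * Λ d)]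
  have h1 : (0:ℝ) ≤ ∑ d ∈ Finset.Icc 1 (n / 6), (g (n / d) : ℝ) * Λ d := by
    apply Finset.sum_nonneg
    intro d hd
    apply mul_nonneg _ vonMangoldt_nonneg
    exact_mod_cast g_nonneg _
  have h2 : ∑ d ∈ Finset.Icc 1 n \ Finset.Icc 1 (n / 6), Λ d
      ≤ ∑ d ∈ Finset.Icc 1 n \ Finset.Icc 1 (n / 6), (g (n / d) : ℝ) * Λ d := by
    apply Finset.sum_le_sum
    intro d hd
    simp only [Finset.mem_sdiff, Finset.mem_Icc, not_and, not_le] at hd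
    have hd1 : n / 6 < d := hd.2 hd.1.1
    have hd2 : d ≤ n := hd.1.2
    have hnd1 : 1 ≤ n / d := Nat.one_le_div_iff (by omega) |>.mpr hd2
    have hnd5 : n / d ≤ 5 := by
      have h6 : n < 6 * d := by omega
      have := (Nat.div_lt_iff_lt_mul (show 0 < d by omega)).mpr (by omega : n < 6 * d)
      omega
    rw [g_eq_one _ hnd1 hnd5]
    simp
  linarith




lemma T_succ (n : ℕ) : T (n + 1) = T n + Real.log (n + 1) := by
  rw [T, T, Nat.factorial_succ]
  push_cast
  rw [Real.log_mul (by positivity) (by positivity)]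
  ring

lemma T_lower (n : ℕ) (hn : 1 ≤ n) : (n : ℝ) * Real.log n - n + 1 ≤ T n := by
  induction n with
  | zero => omega
  | succ m ih =>
    rcases Nat.eq_or_lt_of_le hn with h | h
    · simp [T, ← h]
    · have hm : 1 ≤ m := by omega
      have hmpos : (0:ℝ) < m := by exact_mod_cast hm
      have key : (m : ℝ) * (Real.log (m + 1) - Real.log m) ≤ 1 := by
        have h1 : Real.log ((m + 1 : ℝ) / m) ≤ (m + 1) / m - 1 :=
          Real.log_le_sub_one_of_pos (by positivity)
        rw [Real.log_div (by positivity) (by positivity)] at h1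
        have h2 : ((m:ℝ) + 1) / m - 1 = 1 / m := by field_simp; ring
        rw [h2] at h1
        calc (m:ℝ) * (Real.log (m+1) - Real.log m) ≤ m * (1/m) :=
              mul_le_mul_of_nonneg_left h1 (by positivity)
          _ = 1 := by field_simp
      have := ih hm
      rw [T_succ]
      push_cast
      nlinarith [this]

lemma T_upper (n : ℕ) : T n ≤ ((n : ℝ) + 1) * Real.log (n + 1) - n := by
  induction n with
  | zero => simp [T]
  | succ m ih =>
    have key : 1 ≤ ((m:ℝ) + 2) * (Real.log (m + 2) - Real.log (m + 1)) := by
      have h1 : Real.log ((m + 1 : ℝ) / (m + 2)) ≤ (m + 1) / (m + 2) - 1 :=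
        Real.log_le_sub_one_of_pos (by positivity)
      rw [Real.log_div (by positivity) (by positivity)] at h1
      have h2 : ((m:ℝ) + 1) / (m + 2) - 1 = -(1 / (m + 2)) := by field_simp; ring
      rw [h2] at h1
      have h3 : 1 / ((m:ℝ) + 2) ≤ Real.log (m + 2) - Real.log (m + 1) := by linarith
      calc (1:ℝ) = ((m:ℝ)+2) * (1 / (m+2)) := by field_simp
        _ ≤ ((m:ℝ)+2) * (Real.log (m + 2) - Real.log (m + 1)) :=
            mul_le_mul_of_nonneg_left h3 (by positivity)
    rw [T_succ]
    push_cast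
    have e : Real.log (↑m + 1 + 1) = Real.log (↑m + 2) := by ring_nf
    rw [e]
    nlinarith [ih]

lemma T_upper' (n : ℕ) (hn : 1 ≤ n) :
    T n ≤ (n : ℝ) * Real.log n - n + (Real.log (n + 1) + 1) := by
  have h := T_upper n
  have hmpos : (0:ℝ) < n := by exact_mod_cast hn
  have key : (n : ℝ) * (Real.log (n + 1) - Real.log n) ≤ 1 := by
    have h1 : Real.log ((n + 1 : ℝ) / n) ≤ (n + 1) / n - 1 :=
      Real.log_le_sub_one_of_pos (by positivity)
    rw [Real.log_div (by positivity) (by positivity)] at h1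
    have h2 : ((n:ℝ) + 1) / n - 1 = 1 / n := by field_simp; ring
    rw [h2] at h1
    calc (n:ℝ) * (Real.log (n+1) - Real.log n) ≤ n * (1/n) :=
          mul_le_mul_of_nonneg_left h1 (by positivity)
      _ = 1 := by field_simp
  nlinarith


noncomputable def R (y : ℝ) : ℝ := y * Real.log y - y
noncomputable def A : ℝ :=
  Real.log 2 / 2 + Real.log 3 / 3 + Real.log 5 / 5 - Real.log 30 / 30

lemma R_identity (y : ℝ) (hy : 0 < y) :
    R y - R (y/2) - R (y/3) - R (y/5) + R (y/30) = A * y := by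
  simp only [R, A]
  rw [Real.log_div (by positivity) (by norm_num), Real.log_div (by positivity) (by norm_num),
    Real.log_div (by positivity) (by norm_num), Real.log_div (by positivity) (by norm_num)]
  ring

lemma R_floor_err (n k : ℕ) (hk1 : 1 ≤ k) (hkn : k ≤ n) :
    |R ((n / k : ℕ) : ℝ) - R ((n : ℝ) / k)| ≤ Real.log n + 1 := by
  set q := n / k with hq
  have hq1 : 1 ≤ q := (Nat.one_le_div_iff (by omega)).mpr hkn
  set y' : ℝ := (q : ℝ) with hy'
  set y : ℝ := (n : ℝ) / k with hydef
  have hkpos : (0:ℝ) < k := by exact_mod_cast hk1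
  have hy'1 : (1:ℝ) ≤ y' := by rw [hy']; exact_mod_cast hq1
  have h1 : y' ≤ y := by
    rw [hy', hydef, le_div_iff₀ hkpos]
    exact_mod_cast Nat.div_mul_le_self n k
  have h2 : y ≤ y' + 1 := by
    rw [hydef, div_le_iff₀ hkpos]
    have : n < k * (q + 1) := by
      have h := Nat.div_add_mod n k
      have h3 : n % k < k := Nat.mod_lt _ (by omega)
      calc n = k * q + n % k := h.symm
        _ < k * q + k := by omega
        _ = k * (q + 1) := by ring
    have h5 : (n:ℝ) < k * (q + 1) := by exact_mod_cast this
    have h6 : (k:ℝ) * (q + 1) = (y' + 1) * k := by rw [hy']; ring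
    linarith
  have hy0 : (0:ℝ) < y := by linarith
  have hyn : y ≤ n := by
    rw [hydef, div_le_iff₀ hkpos]
    have h1n : (1:ℝ) ≤ k := by exact_mod_cast hk1
    have hn0 : (0:ℝ) ≤ n := by positivity
    nlinarith
  have hn1 : (1:ℝ) ≤ n := by
    have : 1 ≤ n := le_trans hk1 hkn
    exact_mod_cast this
  have hlogy : Real.log y ≤ Real.log n := Real.log_le_log hy0 hyn
  have hlogy' : 0 ≤ Real.log y' := Real.log_nonneg hy'1
  have hlogn : 0 ≤ Real.log n := Real.log_nonneg hn1
  have hlogy'y : Real.log y' ≤ Real.log y := Real.log_le_log (by linarith) h1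
  have hdiff : Real.log y - Real.log y' ≤ (y - y') / y' := by
    have := Real.log_le_sub_one_of_pos (show (0:ℝ) < y / y' by positivity)
    rw [Real.log_div (by linarith) (by linarith)] at this
    have h4 : y / y' - 1 = (y - y') / y' := by field_simp
    linarith [h4 ▸ this]
  have hkey : y' * (Real.log y - Real.log y') ≤ y - y' := by
    have := mul_le_mul_of_nonneg_left hdiff (show (0:ℝ) ≤ y' by linarith)
    calc y' * (Real.log y - Real.log y') ≤ y' * ((y - y') / y') := this
      _ = y - y' := by field_simp
  rw [abs_le]
  constructor
  · -- lower:  -(log n + 1) ≤ R y' - R y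
    simp only [R]
    nlinarith [mul_le_mul_of_nonneg_left hlogy'y (show (0:ℝ) ≤ y by linarith)]
  ·
    simp only [R]
    nlinarith [mul_le_mul_of_nonneg_right (show y - y' ≤ 1 by linarith) hlogn,
      mul_le_mul_of_nonneg_right (show y - y' ≤ 1 by linarith) hlogy']



lemma L_ge_one (n : ℕ) : 1 ≤ Real.log (n+1) + 1 := by
  have : (0:ℝ) ≤ Real.log (n+1) := Real.log_nonneg (by exact_mod_cast Nat.le_add_left 1 n)
  linarith

lemma T_near_R (m : ℕ) : 0 ≤ T m - R m ∧ T m - R m ≤ Real.log (m+1) + 1 := by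
  rcases Nat.eq_zero_or_pos m with h | h
  · subst h
    simp [T, R]
  · have h1 := T_lower m h
    have h2 := T_upper' m h
    rw [R]
    constructor <;> [linarith; linarith]

lemma TR_err (n k : ℕ) (hk1 : 1 ≤ k) (hkn : k ≤ n) :
    |T (n / k) - R ((n : ℝ) / k)| ≤ 2 * (Real.log (n+1) + 1) := by
  set m := n / k with hm
  have hcast : (((n / k : ℕ) : ℝ)) = (m : ℝ) := by rw [hm]
  have h1 := T_near_R m
  have h2 := R_floor_err n k hk1 hkn
  rw [hcast] at h2
  have hmn : m ≤ n := Nat.div_le_self n k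
  have hlog1 : Real.log (m+1) ≤ Real.log (n+1) := by
    have : ((m:ℝ)+1) ≤ ((n:ℝ)+1) := by exact_mod_cast Nat.succ_le_succ hmn
    exact Real.log_le_log (by positivity) this
  have hlog2 : Real.log n ≤ Real.log (n+1) := by
    rcases Nat.eq_zero_or_pos n with h | h
    · subst h; simp
    · exact Real.log_le_log (by exact_mod_cast h) (by linarith [show ((n:ℝ)) ≤ (n:ℝ)+1 by linarith])
  have h2' := abs_le.mp h2
  rw [abs_le]
  constructor <;> [nlinarith [h1.1, h1.2]; nlinarith [h1.1, h1.2]]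

lemma D_err (n : ℕ) (hn : 30 ≤ n) : |D n - A * n| ≤ 10 * (Real.log (n+1) + 1) := by
  have hn0 : (0:ℝ) < n := by exact_mod_cast (by omega : 0 < n)
  have hA : R ((n:ℝ)) - R ((n:ℝ)/2) - R ((n:ℝ)/3) - R ((n:ℝ)/5) + R ((n:ℝ)/30) = A * n :=
    R_identity n hn0
  have e1 := T_near_R n
  have e2 := abs_le.mp (TR_err n 2 (by norm_num) (by omega))
  have e3 := abs_le.mp (TR_err n 3 (by norm_num) (by omega))
  have e5 := abs_le.mp (TR_err n 5 (by norm_num) (by omega))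
  have e30 := abs_le.mp (TR_err n 30 (by norm_num) (by omega))
  have hD : D n = T n - T (n/2) - T (n/3) - T (n/5) + T (n/30) := rfl
  have hL := L_ge_one n
  rw [abs_le]
  constructor <;> [linarith [e1.1, e1.2]; linarith [e1.1, e1.2]]

lemma A_lb : (0.73 : ℝ) ≤ A := by
  have l2 := Real.log_two_gt_d9
  have u2 := Real.log_two_lt_d9
  have l3 : Real.log 2 ≤ Real.log 3 := Real.log_le_log (by norm_num) (by norm_num)
  have l5 : Real.log 4 ≤ Real.log 5 := Real.log_le_log (by norm_num) (by norm_num)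
  have h4 : Real.log 4 = 2 * Real.log 2 := by
    rw [show (4:ℝ) = 2^2 by norm_num, Real.log_pow]; push_cast; ring
  have h32 : Real.log 30 ≤ Real.log 32 := Real.log_le_log (by norm_num) (by norm_num)
  have h32' : Real.log 32 = 5 * Real.log 2 := by
    rw [show (32:ℝ) = 2^5 by norm_num, Real.log_pow]; push_cast; ring
  rw [A]
  nlinarith

lemma A_pos : 0 < A := lt_of_lt_of_le (by norm_num) A_lb

lemma psi_mono : Monotone psi := by
  intro a b hab
  apply Finset.sum_le_sum_of_subset_of_nonneg
  · exact Finset.Icc_subset_Icc_right hab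
  · intro i _ _
    exact vonMangoldt_nonneg

lemma psi_upper : ∀ n : ℕ, psi n ≤ 6/5 * A * n + 10 * (Real.log (n+1) + 1)^2 + psi 29 := by
  intro n
  induction n using Nat.strong_induction_on with
  | _ n ih =>
    rcases le_or_gt n 29 with h | h
    · have h1 : psi n ≤ psi 29 := psi_mono h
      have h2 : (0:ℝ) ≤ 6/5 * A * n := by
        have := A_pos
        positivity
      nlinarith [L_ge_one n]
    · have hn30 : 30 ≤ n := h
      have hstep := psi_sub_psi_le_D n
      have hD := abs_le.mp (D_err n hn30)
      have hih := ih (n / 6) (Nat.div_lt_self (by omega) (by norm_num))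
      -- cast bound : (n/6 : ℕ) ≤ (n:ℝ)/6
      have hc : ((n / 6 : ℕ) : ℝ) ≤ (n : ℝ) / 6 := Nat.cast_div_le
      -- log bound : log ((n/6)+1) + 1 ≤ log (n+1)
      have hlog : Real.log ((n / 6 : ℕ) + 1) + 1 ≤ Real.log (n + 1) := by
        have hr : Real.exp 1 * (((n / 6 : ℕ) : ℝ) + 1) ≤ (n : ℝ) + 1 := by
          have he := Real.exp_one_lt_d9
          have hn' : (30:ℝ) ≤ n := by exact_mod_cast hn30
          nlinarith
        have h0 : (0:ℝ) < ((n / 6 : ℕ) : ℝ) + 1 := by positivity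
        have hlog1 : Real.log (Real.exp 1 * (((n / 6 : ℕ) : ℝ) + 1)) ≤ Real.log ((n:ℝ) + 1) :=
          Real.log_le_log (by positivity) hr
        rw [Real.log_mul (by positivity) (by positivity), Real.log_exp] at hlog1
        linarith
      set L := Real.log ((n:ℝ) + 1) + 1 with hLdef
      set L6 := Real.log (((n / 6 : ℕ) : ℝ) + 1) + 1 with hL6def
      have hL1 : 1 ≤ L := L_ge_one n
      have hL61 : 1 ≤ L6 := L_ge_one (n/6)
      have hL6L : L6 ≤ L - 1 := by rw [hLdef]; linarith [hlog]
      have hsq : L6^2 + L ≤ L^2 := by nlinarith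
      have hAn : 6/5 * A * ((n / 6 : ℕ) : ℝ) ≤ 1/5 * A * n := by
        have hA6 : (0:ℝ) ≤ 6/5 * A := by
          have := A_pos
          positivity
        have := mul_le_mul_of_nonneg_left hc hA6
        calc 6/5 * A * ((n / 6 : ℕ) : ℝ) ≤ 6/5 * A * ((n:ℝ)/6) := this
          _ = 1/5 * A * n := by ring
      clear_value L L6
      linarith [hih, hstep, hD.2, hAn, hsq]

noncomputable def theta (n : ℕ) : ℝ := ∑ p ∈ (Finset.Icc 1 n).filter Nat.Prime, Real.log p

lemma theta_eq (n : ℕ) : theta n = ∑ p ∈ (Finset.Icc 1 n).filter Nat.Prime, Λ p := by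
  apply Finset.sum_congr rfl
  intro p hp
  simp only [Finset.mem_filter] at hp
  rw [vonMangoldt_apply_prime hp.2]

lemma theta_le_psi (n : ℕ) : theta n ≤ psi n := by
  rw [theta_eq, psi]
  apply Finset.sum_le_sum_of_subset_of_nonneg (Finset.filter_subset _ _)
  intro _ _ _
  exact vonMangoldt_nonneg

lemma prime_pow_card (n : ℕ) (hn : 1 ≤ n) :
    ((Finset.Icc 1 n).filter (fun k => IsPrimePow k ∧ ¬ k.Prime)).card
      ≤ Nat.sqrt n * (Nat.log 2 n + 1) := by
  have h := Finset.card_le_card_of_injOn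
    (f := fun k => (k.minFac, k.factorization k.minFac))
    (s := (Finset.Icc 1 n).filter (fun k => IsPrimePow k ∧ ¬ k.Prime))
    (t := (Finset.Icc 2 (Nat.sqrt n)) ×ˢ (Finset.Icc 2 (Nat.log 2 n)))
    ?_ ?_
  · calc _ ≤ _ := h
      _ ≤ _ := by
        rw [Finset.card_product]
        apply Nat.mul_le_mul <;> simp [Nat.card_Icc] <;> omega
  · intro k hk
    simp only [Finset.mem_coe, Finset.mem_filter, Finset.mem_Icc] at hk
    obtain ⟨⟨hk1, hkn⟩, hpp, hnp⟩ := hk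
    obtain ⟨p, j, hp, hj, rfl⟩ := hpp
    rw [← Nat.prime_iff] at hp
    have hminfac : (p ^ j).minFac = p := Nat.Prime.pow_minFac hp (by omega)
    have hfact : (p ^ j).factorization p = j := by
      rw [Nat.Prime.factorization_pow hp]
      simp
    have hj2 : 2 ≤ j := by
      rcases Nat.lt_or_ge j 2 with h | h
      · have hj1 : j = 1 := by omega
        subst hj1
        exact absurd (by simpa using hp) hnp
      · exact h
    have hp2 : 2 ≤ p := hp.two_le
    have hpsqrt : p ≤ Nat.sqrt n := by
      rw [Nat.le_sqrt]
      calc p * p = p ^ 2 := (sq p).symm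
        _ ≤ p ^ j := Nat.pow_le_pow_right (by omega) hj2
        _ ≤ n := hkn
    have hjlog : j ≤ Nat.log 2 n := by
      apply (Nat.le_log_iff_pow_le (by norm_num) (by omega)).mpr
      calc 2 ^ j ≤ p ^ j := Nat.pow_le_pow_left hp2 j
        _ ≤ n := hkn
    simp only [Finset.mem_coe, Finset.mem_product, Finset.mem_Icc, hminfac, hfact]
    exact ⟨⟨hp2, hpsqrt⟩, hj2, hjlog⟩
  · intro k1 hk1 k2 hk2 heq
    simp only [Finset.mem_coe, Finset.mem_filter] at hk1 hk2
    have r1 : k1.minFac ^ (k1.factorization k1.minFac) = k1 := by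
      obtain ⟨p, j, hp, hj, rfl⟩ := hk1.2.1
      rw [← Nat.prime_iff] at hp
      rw [Nat.Prime.pow_minFac hp (by omega), Nat.Prime.factorization_pow hp]
      simp
    have r2 : k2.minFac ^ (k2.factorization k2.minFac) = k2 := by
      obtain ⟨p, j, hp, hj, rfl⟩ := hk2.2.1
      rw [← Nat.prime_iff] at hp
      rw [Nat.Prime.pow_minFac hp (by omega), Nat.Prime.factorization_pow hp]
      simp
    rw [← r1, ← r2]
    rw [Prod.mk.injEq] at heq
    rw [← r1, ← r2, heq.2, heq.1]

lemma psi_sub_theta (n : ℕ) (hn : 1 ≤ n) :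
    psi n - theta n ≤
      (Real.sqrt n * (Real.log n / Real.log 2 + 1) + 1) * Real.log n := by
  have hsplit := Finset.sum_filter_add_sum_filter_not (Finset.Icc 1 n) Nat.Prime Λ
  have hB : psi n - theta n
      = ∑ k ∈ (Finset.Icc 1 n).filter (fun k => ¬ k.Prime), Λ k := by
    rw [psi, theta_eq]
    linarith [hsplit]
  rw [hB]
  set B := (Finset.Icc 1 n).filter (fun k => IsPrimePow k ∧ ¬ k.Prime) with hBdef
  have hsub : ∑ k ∈ (Finset.Icc 1 n).filter (fun k => ¬ k.Prime), Λ k = ∑ k ∈ B, Λ k := by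
    apply (Finset.sum_subset _ _).symm
    · intro k hk
      simp only [hBdef, Finset.mem_filter] at hk ⊢
      exact ⟨hk.1, hk.2.2⟩
    · intro k hk hnk
      simp only [hBdef, Finset.mem_filter] at hk hnk
      rw [vonMangoldt_apply, if_neg]
      tauto
  rw [hsub]
  have hbound : ∀ k ∈ B, Λ k ≤ Real.log n := by
    intro k hk
    simp only [hBdef, Finset.mem_filter, Finset.mem_Icc] at hk
    calc Λ k ≤ Real.log k := vonMangoldt_le_log
      _ ≤ Real.log n := Real.log_le_log (by exact_mod_cast hk.1.1) (by exact_mod_cast hk.1.2)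
  have hlogn : 0 ≤ Real.log n := Real.log_nonneg (by exact_mod_cast hn)
  calc ∑ k ∈ B, Λ k ≤ B.card * Real.log n := by
        have := Finset.sum_le_card_nsmul B Λ (Real.log n) hbound
        simpa using this
    _ ≤ (Real.sqrt n * (Real.log n / Real.log 2 + 1) + 1) * Real.log n := by
        apply mul_le_mul_of_nonneg_right _ hlogn
        have hcard := prime_pow_card n hn
        have hc1 : ((Nat.sqrt n : ℕ) : ℝ) ≤ Real.sqrt n := by
          apply Real.le_sqrt_of_sq_le
          have := Nat.sqrt_le' n
          exact_mod_cast this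
        have hc2 : ((Nat.log 2 n : ℕ) : ℝ) ≤ Real.log n / Real.log 2 := by
          have h2n : (2:ℝ) ^ (Nat.log 2 n) ≤ (n:ℝ) := by
            exact_mod_cast Nat.pow_log_le_self 2 (by omega)
          have := Real.log_le_log (by positivity) h2n
          rw [Real.log_pow] at this
          rw [le_div_iff₀ (Real.log_pos (by norm_num))]
          linarith
        have hcardR : ((B.card : ℕ) : ℝ) ≤ (Nat.sqrt n : ℝ) * ((Nat.log 2 n : ℝ) + 1) := by
          exact_mod_cast hcard
        have hs0 : (0:ℝ) ≤ Real.sqrt n := Real.sqrt_nonneg _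
        have hl0 : (0:ℝ) ≤ (Nat.log 2 n : ℝ) + 1 := by positivity
        have hstep2 : (Nat.sqrt n : ℝ) * ((Nat.log 2 n : ℝ) + 1)
            ≤ Real.sqrt n * (Real.log n / Real.log 2 + 1) := by
          apply mul_le_mul hc1 (by linarith) hl0 hs0
        calc ((B.card : ℕ) : ℝ) ≤ (Nat.sqrt n : ℝ) * ((Nat.log 2 n : ℝ) + 1) := hcardR
          _ ≤ Real.sqrt n * (Real.log n / Real.log 2 + 1) := hstep2
          _ ≤ Real.sqrt n * (Real.log n / Real.log 2 + 1) + 1 := by linarith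

lemma pi_filter (m : ℕ) :
    Nat.primeCounting m = ((Finset.Icc 1 m).filter Nat.Prime).card := by
  rw [Nat.primeCounting, Nat.primeCounting', Nat.count_eq_card_filter_range]
  congr 1
  ext k
  simp only [Finset.mem_filter, Finset.mem_range, Finset.mem_Icc]
  constructor
  · rintro ⟨hk, hp⟩
    exact ⟨⟨hp.two_le.trans' (by norm_num), by omega⟩, hp⟩
  · rintro ⟨hk, hp⟩
    exact ⟨by omega, hp⟩

lemma theta_diff_le_count (n : ℕ) :
    theta (2*n) - theta n
      ≤ ((Nat.primeCounting (2*n) : ℝ) - (Nat.primeCounting n : ℝ)) * Real.log (2*n) := by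
  have hsub : (Finset.Icc 1 n).filter Nat.Prime ⊆ (Finset.Icc 1 (2*n)).filter Nat.Prime :=
    Finset.filter_subset_filter _ (Finset.Icc_subset_Icc_right (by omega))
  have hdiff : theta (2*n) - theta n
      = ∑ p ∈ ((Finset.Icc 1 (2*n)).filter Nat.Prime) \ ((Finset.Icc 1 n).filter Nat.Prime),
          Real.log p := by
    rw [theta, theta, sub_eq_iff_eq_add, eq_comm]
    exact Finset.sum_sdiff hsub
  rw [hdiff]
  have hcard : (((Finset.Icc 1 (2*n)).filter Nat.Prime) \ ((Finset.Icc 1 n).filter Nat.Prime)).card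
      = Nat.primeCounting (2*n) - Nat.primeCounting n := by
    rw [Finset.card_sdiff_of_subset hsub, pi_filter, pi_filter]
  have hle : ∀ p ∈ ((Finset.Icc 1 (2*n)).filter Nat.Prime) \ ((Finset.Icc 1 n).filter Nat.Prime),
      Real.log p ≤ Real.log (2*n) := by
    intro p hp
    simp only [Finset.mem_sdiff, Finset.mem_filter, Finset.mem_Icc] at hp
    apply Real.log_le_log (by exact_mod_cast hp.1.1.1)
    exact_mod_cast hp.1.1.2
  calc _ ≤ (((Finset.Icc 1 (2*n)).filter Nat.Prime) \ ((Finset.Icc 1 n).filter Nat.Prime)).card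
        * Real.log (2*n) := by
        have := Finset.sum_le_card_nsmul _ _ _ hle
        simpa using this
    _ = _ := by
        rw [hcard]
        have hmono : Nat.primeCounting n ≤ Nat.primeCounting (2*n) :=
          Nat.monotone_primeCounting (by omega)
        rw [Nat.cast_sub hmono]

lemma psi29_le : psi 29 ≤ 900 := by
  have h : ∀ k ∈ Finset.Icc 1 29, Λ k ≤ (28:ℝ) := by
    intro k hk
    simp only [Finset.mem_Icc] at hk
    calc Λ k ≤ Real.log k := vonMangoldt_le_log
      _ ≤ Real.log 29 := Real.log_le_log (by exact_mod_cast hk.1) (by exact_mod_cast hk.2)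
      _ ≤ 29 - 1 := by linarith [Real.log_le_sub_one_of_pos (show (0:ℝ) < 29 by norm_num)]
      _ = 28 := by norm_num
  calc psi 29 ≤ (Finset.Icc 1 29).card * (28:ℝ) := by
        have := Finset.sum_le_card_nsmul _ _ _ h
        simpa [psi] using this
    _ ≤ 900 := by norm_num [Nat.card_Icc]

lemma log_le_eight_rpow (y : ℝ) (hy : 0 < y) : Real.log y ≤ 8 * y ^ (1/8 : ℝ) := by
  have hu : (0:ℝ) < y ^ (1/8 : ℝ) := Real.rpow_pos_of_pos hy _
  have h1 : Real.log (y ^ (1/8:ℝ)) = (1/8) * Real.log y := Real.log_rpow hy _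
  have h2 : Real.log (y ^ (1/8:ℝ)) ≤ y ^ (1/8:ℝ) - 1 := Real.log_le_sub_one_of_pos hu
  nlinarith

lemma theta_diff_lower :
    ∀ n : ℕ, 1000000000000000000000 ≤ n → (0.54:ℝ) * n ≤ theta (2*n) - theta n := by
  intro n hn
  have hn1 : 1 ≤ n := by omega
  have h2n30 : 30 ≤ 2*n := by omega
  have h1 := psi_sub_theta (2*n) (by omega)
  have h2 : theta n ≤ psi n := theta_le_psi n
  have h3 : A * ((2*n : ℕ) : ℝ) - 10 * (Real.log (((2*n : ℕ) : ℝ) + 1) + 1) ≤ psi (2*n) := by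
    have hD := (abs_le.mp (D_err (2*n) h2n30)).1
    linarith [D_le_psi (2*n)]
  have h4 := psi_upper n
  have hK := psi29_le
  set m : ℝ := (((2*n : ℕ)) : ℝ) with hm
  have hmeq : m = 2 * (n:ℝ) := by rw [hm]; push_cast; ring
  have hnR : (1:ℝ) ≤ (n:ℝ) := by exact_mod_cast hn1
  have hmpos : (0:ℝ) < m := by rw [hmeq]; linarith
  have hm2 : (2:ℝ) ≤ m := by rw [hmeq]; linarith
  set u : ℝ := m ^ (1/8 : ℝ) with hu
  have hupos : 0 < u := Real.rpow_pos_of_pos hmpos _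
  have hu8 : u ^ (8:ℕ) = m := by
    rw [hu, ← Real.rpow_natCast (m ^ (1/8:ℝ)) 8, ← Real.rpow_mul hmpos.le]
    norm_num
  have hu4 : Real.sqrt m = u ^ (4:ℕ) := by
    rw [hu, ← Real.rpow_natCast (m ^ (1/8:ℝ)) 4, ← Real.rpow_mul hmpos.le,
      Real.sqrt_eq_rpow]
    norm_num
  have hlogm : Real.log m ≤ 8 * u := by
    have := log_le_eight_rpow m hmpos
    rw [← hu] at this
    linarith
  have hu80 : (80:ℝ) ≤ u := by
    have h808 : (((80:ℝ)^(8:ℕ)) : ℝ) ^ (1/8 : ℝ) = 80 := by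
      rw [← Real.rpow_natCast (80:ℝ) 8, ← Real.rpow_mul (by norm_num)]
      norm_num
    have hm80 : ((80:ℝ)^(8:ℕ)) ≤ m := by
      rw [hm]
      have hnat : (80:ℕ)^(8:ℕ) ≤ 2*n := by
        calc (80:ℕ)^(8:ℕ) ≤ 1000000000000000000000 := by norm_num
          _ ≤ n := hn
          _ ≤ 2*n := by omega
      exact_mod_cast hnat
    calc (80:ℝ) = (((80:ℝ)^(8:ℕ)) : ℝ) ^ (1/8:ℝ) := h808.symm
      _ ≤ m ^ (1/8:ℝ) := Real.rpow_le_rpow (by positivity) hm80 (by norm_num)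
      _ = u := hu.symm
  have hu1 : (1:ℝ) ≤ u := by linarith
  have hlog2 : (2/3 : ℝ) ≤ Real.log 2 := by linarith [Real.log_two_gt_d9]
  have hlogm0 : 0 ≤ Real.log m := Real.log_nonneg (by linarith)
  -- power comparison facts
  have hp2 : (0:ℝ) ≤ u^(2:ℕ) := by positivity
  have hp4 : (0:ℝ) ≤ u^(4:ℕ) := by positivity
  have hp5 : (0:ℝ) ≤ u^(5:ℕ) := by positivity
  have hp6 : (0:ℝ) ≤ u^(6:ℕ) := by positivity
  have hu2 : (6400:ℝ) ≤ u^(2:ℕ) := by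
    have := pow_le_pow_left₀ (by norm_num : (0:ℝ) ≤ 80) hu80 2
    norm_num at this
    linarith
  have c1 : 6400 * u^(6:ℕ) ≤ u^(8:ℕ) := by
    calc 6400 * u^(6:ℕ) ≤ u^(2:ℕ) * u^(6:ℕ) := mul_le_mul_of_nonneg_right hu2 hp6
      _ = u^(8:ℕ) := by ring
  have c2 : 6400 * u^(4:ℕ) ≤ u^(6:ℕ) := by
    calc 6400 * u^(4:ℕ) ≤ u^(2:ℕ) * u^(4:ℕ) := mul_le_mul_of_nonneg_right hu2 hp4
      _ = u^(6:ℕ) := by ring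
  have c3 : 6400 * u^(2:ℕ) ≤ u^(4:ℕ) := by
    calc 6400 * u^(2:ℕ) ≤ u^(2:ℕ) * u^(2:ℕ) := mul_le_mul_of_nonneg_right hu2 hp2
      _ = u^(4:ℕ) := by ring
  have c5 : u ≤ u^(2:ℕ) := by nlinarith [mul_nonneg hupos.le (sub_nonneg.mpr hu1)]
  have c6 : u^(4:ℕ) ≤ u^(5:ℕ) := by nlinarith [mul_nonneg hp4 (sub_nonneg.mpr hu1)]
  have c7 : (1:ℝ) ≤ u^(5:ℕ) := by
    have := pow_le_pow_left₀ (by norm_num : (0:ℝ) ≤ 1) hu1 5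
    simpa using this
  -- bound the error terms
  have hE : (Real.sqrt m * (Real.log m / Real.log 2 + 1) + 1) * Real.log m
      ≤ 112 * u^(6:ℕ) := by
    have hdiv : Real.log m / Real.log 2 ≤ 12 * u := by
      rw [div_le_iff₀ (by linarith)]
      nlinarith [mul_nonneg (by linarith : (0:ℝ) ≤ 12*u) (by linarith : (0:ℝ) ≤ Real.log 2 - 2/3)]
    have hfac : Real.sqrt m * (Real.log m / Real.log 2 + 1) + 1 ≤ 14 * u^(5:ℕ) := by
      rw [hu4]
      have h5 : u^(4:ℕ) * (Real.log m / Real.log 2 + 1) ≤ u^(4:ℕ) * (12*u + 1) := by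
        apply mul_le_mul_of_nonneg_left _ hp4
        linarith
      have h6 : u^(4:ℕ) * (12*u + 1) = 12*u^(5:ℕ) + u^(4:ℕ) := by ring
      -- u^4 + 1 ≤ 2 u^5
      linarith [c6, c7]
    calc (Real.sqrt m * (Real.log m / Real.log 2 + 1) + 1) * Real.log m
        ≤ (14 * u^(5:ℕ)) * (8 * u) := by
          apply mul_le_mul hfac hlogm hlogm0 (by linarith)
      _ = 112 * u^(6:ℕ) := by ring
  have hlogm1 : Real.log (m + 1) ≤ 8*u + 1 := by
    have hh : Real.log (m+1) ≤ Real.log (2*m) := Real.log_le_log (by linarith) (by linarith)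
    rw [Real.log_mul (by norm_num) (by linarith)] at hh
    linarith [Real.log_two_lt_d9]
  have hlogn1 : Real.log ((n:ℝ) + 1) ≤ 8*u := by
    have hle : ((n:ℝ)+1) ≤ m := by rw [hmeq]; linarith
    calc Real.log ((n:ℝ)+1) ≤ Real.log m := Real.log_le_log (by linarith) hle
      _ ≤ 8*u := hlogm
  have hsq : (Real.log ((n:ℝ)+1) + 1)^2 ≤ 81 * u^(2:ℕ) := by
    have h0 : 0 ≤ Real.log ((n:ℝ)+1) := Real.log_nonneg (by linarith)
    nlinarith
  have herr : (Real.sqrt m * (Real.log m / Real.log 2 + 1) + 1) * Real.log m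
      + 10 * (Real.log (m + 1) + 1)
      + 10 * (Real.log ((n:ℝ)+1) + 1)^2 + 900 ≤ (0.022:ℝ) * u^(8:ℕ) := by
    have hkey : 112 * u^(6:ℕ) + 10*(8*u + 2) + 810 * u^(2:ℕ) + 900 ≤ 0.022 * u^(8:ℕ) := by
      linarith [c1, c2, c3, c5, hu2]
    nlinarith [hE, hlogm1, hsq]
  have hu8n : u^(8:ℕ) = 2*(n:ℝ) := by rw [hu8, hmeq]
  have herr' : (Real.sqrt m * (Real.log m / Real.log 2 + 1) + 1) * Real.log m
      + 10 * (Real.log (m + 1) + 1)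
      + 10 * (Real.log ((n:ℝ)+1) + 1)^2 + 900 ≤ 0.044 * (n:ℝ) := by
    calc _ ≤ (0.022:ℝ) * u^(8:ℕ) := herr
      _ = 0.044 * (n:ℝ) := by rw [hu8n]; ring
  have hA := A_lb
  have hApos := A_pos
  have h45 : A * m = 6/5 * A * (n:ℝ) + 4/5 * A * (n:ℝ) := by rw [hmeq]; ring
  have hAn : (0.584:ℝ) * (n:ℝ) ≤ 4/5 * A * (n:ℝ) := by nlinarith
  linarith [h1, h2, h3, h4, hK, herr', hAn, h45]

theorem primes_in_dyadic_interval' :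
    ∃ x₀ : ℝ, ∀ x : ℝ, x₀ ≤ x →
      (Nat.primeCounting ⌊2 * x⌋₊ : ℝ) - (Nat.primeCounting ⌊x⌋₊ : ℝ) >
        x / (2 * Real.log x) := by
  use 10^22
  intro x hx
  have hxpos : (0:ℝ) < x := by nlinarith
  set n : ℕ := ⌊x⌋₊ with hn
  have hnx : (n:ℝ) ≤ x := Nat.floor_le hxpos.le
  have hxn : x < (n:ℝ) + 1 := Nat.lt_floor_add_one x
  have hnbig : 1000000000000000000000 ≤ n := by
    apply Nat.le_floor
    push_cast
    nlinarith
  have hn1 : (1:ℝ) ≤ (n:ℝ) := by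
    have : (1:ℕ) ≤ n := by omega
    exact_mod_cast this
  -- log x ≥ 20
  have hexp20 : Real.exp 20 ≤ x := by
    have h1 : Real.exp 20 = Real.exp 1 ^ (20:ℕ) := by
      rw [← Real.exp_nat_mul]; norm_num
    have h2 : Real.exp 1 ^ (20:ℕ) ≤ (3:ℝ) ^ (20:ℕ) := by
      apply pow_le_pow_left₀ (Real.exp_pos 1).le
      linarith [Real.exp_one_lt_d9]
    have h3 : (3:ℝ) ^ (20:ℕ) ≤ 10^22 := by norm_num
    linarith [h1 ▸ (h2.trans h3)]
  have ha20 : (20:ℝ) ≤ Real.log x := by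
    rw [Real.le_log_iff_exp_le hxpos]
    exact hexp20
  set a : ℝ := Real.log x with ha
  have ha0 : 0 < a := by linarith
  -- sqrt facts
  set s : ℝ := Real.sqrt x with hs
  have hs3 : (3:ℝ) ≤ s := by
    rw [hs]
    rw [show (3:ℝ) = Real.sqrt 9 by
      rw [show (9:ℝ) = 3^2 by norm_num, Real.sqrt_sq (by norm_num)]]
    exact Real.sqrt_le_sqrt (by nlinarith)
  have hss : s * s = x := Real.mul_self_sqrt hxpos.le
  have ha2s : a ≤ 2 * s := by
    have h1 : Real.log s = a / 2 := by rw [hs, ha, Real.log_sqrt hxpos.le]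
    have h2 : Real.log s ≤ s - 1 := Real.log_le_sub_one_of_pos (by linarith)
    linarith
  -- the chebyshev bounds
  have hkey := theta_diff_lower n hnbig
  have hcount := theta_diff_le_count n
  set P : ℝ := (Nat.primeCounting (2*n) : ℝ) - (Nat.primeCounting n : ℝ) with hP
  set L : ℝ := Real.log (2*(n:ℝ)) with hL
  have hcount' : (0.54:ℝ) * n ≤ P * L := by
    have hcast : Real.log ((2*n : ℕ) : ℝ) = L := by rw [hL]; push_cast; ring_nf
    calc (0.54:ℝ) * n ≤ theta (2*n) - theta n := hkey
      _ ≤ P * Real.log ((2*n:ℕ) : ℝ) := by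
          have := hcount
          push_cast at this ⊢
          convert this using 2 <;> push_cast <;> ring
      _ = P * L := by rw [hcast]
  have hLpos : 0 < L := by
    rw [hL]
    apply Real.log_pos
    linarith
  have hLle : L ≤ Real.log 2 + a := by
    rw [hL, Real.log_mul (by norm_num) (by linarith), ha]
    have : Real.log (n:ℝ) ≤ Real.log x := Real.log_le_log (by linarith) hnx
    linarith
  have hlog2 : Real.log 2 ≤ 0.7 := by linarith [Real.log_two_lt_d9]
  -- numeric key inequality : x * L < 1.08 * n * a
  have hnum : x * L < 1.08 * (n:ℝ) * a := by
    have k1 : 1.6 * x ≤ 0.08 * x * a := by nlinarith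
    have k2 : 2.7 * s ≤ 0.9 * x := by nlinarith
    have k4 : 1.08 * a < 0.9 * x := by nlinarith
    have k6 : 1.08 * (x - 1) * a ≤ 1.08 * (n:ℝ) * a := by nlinarith
    have k7 : x * L ≤ x * (0.7 + a) := by nlinarith [hLle, hlog2]
    nlinarith
  -- conclude : x < P * (2 * a)
  have hfin : x < P * (2 * a) := by
    have h1 : x * L < (P * (2*a)) * L := by
      have h2 : 1.08 * (n:ℝ) * a ≤ (2*a) * (P * L) := by nlinarith [hcount']
      nlinarith
    exact lt_of_mul_lt_mul_right h1 hLpos.le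
  -- final : relate to floor of 2x
  have hmono : (Nat.primeCounting (2*n) : ℝ) ≤ (Nat.primeCounting ⌊2*x⌋₊ : ℝ) := by
    have h2n : 2*n ≤ ⌊2*x⌋₊ := by
      apply Nat.le_floor
      push_cast
      linarith
    exact_mod_cast Nat.monotone_primeCounting h2n
  rw [gt_iff_lt, div_lt_iff₀ (by positivity)]
  have : P * (2 * a) ≤ ((Nat.primeCounting ⌊2*x⌋₊ : ℝ) - (Nat.primeCounting ⌊x⌋₊ : ℝ)) * (2 * a) := by
    apply mul_le_mul_of_nonneg_right _ (by positivity)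
    rw [hP, hn]
    linarith [hmono]
  linarith [hfin]
end Cheb

/-- There exists a real number `x₀` such that for all real `x ≥ x₀`,
`π(2x) − π(x) > x/(2·log x)`, where `π(y)` denotes the number of primes `≤ y`. -/
theorem primes_in_dyadic_interval :
    ∃ x₀ : ℝ, ∀ x : ℝ, x₀ ≤ x →
      (Nat.primeCounting ⌊2 * x⌋₊ : ℝ) - (Nat.primeCounting ⌊x⌋₊ : ℝ) >
        x / (2 * Real.log x) := by
  exact Cheb.primes_in_dyadic_interval'
end
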